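/- Let μ and ν be probability distributions on the states of a discounted MDP with γ ∈ [0,1), and let π_* be any stochastic policy. Define C*_{μ,ν} = (1-γ)² ∑_{i≥0} ∑_{j≥0} γ^{i+j} sup_π ‖μ (P_{π_*})^i (P_π)^j / ν‖_∞, where the supremum ranges over all stochastic policies π and ‖ρ/ν‖_∞ denotes the smallest C with ρ(s) ≤ C ν(s) for all s. Then (1-γ)·‖d_{μ,π_*}/ν‖_∞ ≤ C*_{μ,ν}. -/

import Mathlib

open Matrix Filter Topology

section MDPdefs

variable {S A : Type*}

/-- `P` is a transition kernel: nonnegative and each row sums to one. -/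
def IsKernel [Fintype S] (P : S → A → S → ℝ) : Prop :=
  ∀ s a, (∀ s', 0 ≤ P s a s') ∧ ∑ s', P s a s' = 1

/-- A stochastic policy: a probability distribution over actions in each state. -/
def IsPolicy [Fintype A] (π : S → A → ℝ) : Prop :=
  ∀ s, (∀ a, 0 ≤ π s a) ∧ ∑ a, π s a = 1

/-- A probability distribution over states. -/
def IsDist [Fintype S] (μ : S → ℝ) : Prop :=
  (∀ s, 0 ≤ μ s) ∧ ∑ s, μ s = 1

/-- The reward vector `r_π(s) = ∑_a π(a|s) r(s,a)`. -/
def rPol [Fintype A] (r : S → A → ℝ) (π : S → A → ℝ) : S → ℝ :=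
  fun s => ∑ a, π s a * r s a

/-- The stochastic matrix `P_π(s,s') = ∑_a π(a|s) P(s'|s,a)`. -/
def PPol [Fintype A] (P : S → A → S → ℝ) (π : S → A → ℝ) : Matrix S S ℝ :=
  Matrix.of fun s s' => ∑ a, π s a * P s a s'

/-- The Bellman operator `T_π v = r_π + γ P_π v`. -/
noncomputable def bellman [Fintype S] [Fintype A] (P : S → A → S → ℝ) (r : S → A → ℝ)
    (γ : ℝ) (π : S → A → ℝ) (v : S → ℝ) : S → ℝ :=
  rPol r π + γ • (PPol P π *ᵥ v)

/-- The optimal Bellman operator `(Tv)(s) = max_a [r(s,a) + γ ∑_{s'} P(s'|s,a) v(s')]`. -/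
noncomputable def optBellman [Fintype S] [Fintype A] [Nonempty A] (P : S → A → S → ℝ)
    (r : S → A → ℝ) (γ : ℝ) (v : S → ℝ) : S → ℝ :=
  fun s => Finset.univ.sup' Finset.univ_nonempty fun a => r s a + γ * ∑ s', P s a s' * v s'

/-- The value function of policy `π`, `v_π = (I - γ P_π)⁻¹ r_π`, the unique solution of
`v = r_π + γ P_π v` when `0 ≤ γ < 1`. -/
noncomputable def valueFn [Fintype S] [Fintype A] [DecidableEq S] (P : S → A → S → ℝ)
    (r : S → A → ℝ) (γ : ℝ) (π : S → A → ℝ) : S → ℝ :=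
  ((1 : Matrix S S ℝ) - γ • PPol P π)⁻¹ *ᵥ rPol r π

/-- The γ-weighted occupancy measure `d_{μ,π} = (1-γ) μ (I - γ P_π)⁻¹` (a row vector). -/
noncomputable def occ [Fintype S] [Fintype A] [DecidableEq S] (P : S → A → S → ℝ)
    (γ : ℝ) (μ : S → ℝ) (π : S → A → ℝ) : S → ℝ :=
  (1 - γ) • (μ ᵥ* ((1 : Matrix S S ℝ) - γ • PPol P π)⁻¹)

/-- The stochastic mixture `(1-α)π + απ'`. -/
def mix (α : ℝ) (π π' : S → A → ℝ) : S → A → ℝ :=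
  fun s a => (1 - α) * π s a + α * π' s a

/-- The `ν`-greedy-complexity `E_ν(Π) = sup_{ρ∈Π} inf_{ρ'∈Π} d_{ν,ρ}·(T v_ρ - T_{ρ'} v_ρ)`. -/
noncomputable def greedyCplx [Fintype S] [Fintype A] [Nonempty A] [DecidableEq S]
    (P : S → A → S → ℝ) (r : S → A → ℝ) (γ : ℝ) (ν : S → ℝ)
    (Pol : Set (S → A → ℝ)) : ℝ :=
  ⨆ ρ : Pol, ⨅ ρ' : Pol,
    occ P γ ν (ρ : S → A → ℝ) ⬝ᵥ
      (optBellman P r γ (valueFn P r γ (ρ : S → A → ℝ)) -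
        bellman P r γ (ρ' : S → A → ℝ) (valueFn P r γ (ρ : S → A → ℝ)))

/-- `π` is an `ε`-local optimum of `J_ν` over `Pol`: for every `π' ∈ Pol`, the (one-sided)
limit of `(ν·v_{(1-α)π+απ'} - ν·v_π)/α` as `α → 0⁺` exists and is at most `ε`. -/
def IsLocalOpt [Fintype S] [Fintype A] [DecidableEq S]
    (P : S → A → S → ℝ) (r : S → A → ℝ) (γ : ℝ) (ν : S → ℝ)
    (Pol : Set (S → A → ℝ)) (π : S → A → ℝ) (ε : ℝ) : Prop :=
  ∀ π' ∈ Pol, ∃ L ≤ ε,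
    Tendsto (fun α : ℝ =>
        (ν ⬝ᵥ valueFn P r γ (mix α π π') - ν ⬝ᵥ valueFn P r γ π) / α)
      (𝓝[>] 0) (𝓝 L)

end MDPdefs

/-- The smallest constant `C ∈ [0,∞]` with `ρ(s) ≤ C ν(s)` for all `s` (extended reals). -/
noncomputable def eratio {S : Type*} [Fintype S] (ρ ν : S → ℝ) : ENNReal :=
  sInf {C : ENNReal | ∀ s, ENNReal.ofReal (ρ s) ≤ C * ENNReal.ofReal (ν s)}


section AuxLemmas

open scoped ENNReal

lemma eratio_le_of {S : Type*} [Fintype S] {ρ ν : S → ℝ} {K : ℝ≥0∞}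
    (h : ∀ s, ENNReal.ofReal (ρ s) ≤ K * ENNReal.ofReal (ν s)) : eratio ρ ν ≤ K :=
  sInf_le h

lemma le_eratio_mul {S : Type*} [Fintype S] (ρ ν : S → ℝ) {s : S} (hs : 0 < ν s) :
    ENNReal.ofReal (ρ s) ≤ eratio ρ ν * ENNReal.ofReal (ν s) := by
  have hb0 : ENNReal.ofReal (ν s) ≠ 0 := (ENNReal.ofReal_pos.mpr hs).ne'
  have hbt : ENNReal.ofReal (ν s) ≠ ⊤ := ENNReal.ofReal_ne_top
  have key : ENNReal.ofReal (ρ s) / ENNReal.ofReal (ν s) ≤ eratio ρ ν := by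
    refine le_sInf fun C hC => ?_
    exact (ENNReal.div_le_iff_le_mul (Or.inl hb0) (Or.inl hbt)).mpr (hC s)
  calc ENNReal.ofReal (ρ s)
      = ENNReal.ofReal (ρ s) / ENNReal.ofReal (ν s) * ENNReal.ofReal (ν s) :=
        (ENNReal.div_mul_cancel hb0 hbt).symm
    _ ≤ eratio ρ ν * ENNReal.ofReal (ν s) := mul_le_mul_left key _

lemma eratio_eq_top {S : Type*} [Fintype S] (ρ ν : S → ℝ) {s : S}
    (hν : ν s = 0) (hρ : 0 < ρ s) : eratio ρ ν = ⊤ := by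
  have h : {C : ℝ≥0∞ | ∀ s, ENNReal.ofReal (ρ s) ≤ C * ENNReal.ofReal (ν s)} = ∅ := by
    ext C
    simp only [Set.mem_setOf_eq, Set.mem_empty_iff_false, iff_false, not_forall]
    refine ⟨s, ?_⟩
    rw [hν, ENNReal.ofReal_zero, mul_zero]
    simp [ENNReal.ofReal_eq_zero, not_le.mpr hρ]
  rw [eratio, h, sInf_empty]

lemma PPol_nonneg' {S A : Type*} [Fintype S] [Fintype A] {P : S → A → S → ℝ}
    (hP : IsKernel P) {π : S → A → ℝ} (hπ : IsPolicy π) (s s' : S) :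
    0 ≤ PPol P π s s' :=
  Finset.sum_nonneg fun a _ => mul_nonneg ((hπ s).1 a) ((hP s a).1 s')

lemma PPol_row_sum {S A : Type*} [Fintype S] [Fintype A] {P : S → A → S → ℝ}
    (hP : IsKernel P) {π : S → A → ℝ} (hπ : IsPolicy π) (s : S) :
    ∑ s', PPol P π s s' = 1 := by
  rw [show ∑ s', PPol P π s s' = ∑ s', ∑ a, π s a * P s a s' from rfl, Finset.sum_comm]
  have h : ∀ a ∈ Finset.univ, ∑ s' : S, π s a * P s a s' = π s a := by
    intro a _
    rw [← Finset.mul_sum, (hP s a).2, mul_one]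
  rw [Finset.sum_congr rfl h, (hπ s).2]

lemma vecMul_pow_nonneg {S : Type*} [Fintype S] [DecidableEq S] {M : Matrix S S ℝ}
    (hnn : ∀ s s', 0 ≤ M s s') {μ : S → ℝ} (hμ : ∀ s, 0 ≤ μ s) (i : ℕ) (s : S) :
    0 ≤ (μ ᵥ* M ^ i) s := by
  induction i generalizing s with
  | zero => simpa using hμ s
  | succ i ih =>
    rw [pow_succ, ← Matrix.vecMul_vecMul]
    exact Finset.sum_nonneg fun s' _ => mul_nonneg (ih s') (hnn s' s)

lemma hasSum_vecMul_geom {S : Type*} [Fintype S] [DecidableEq S] {M : Matrix S S ℝ}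
    (hnn : ∀ s s', 0 ≤ M s s') (hrow : ∀ s, ∑ s', M s s' = 1)
    {γ : ℝ} (hγ0 : 0 ≤ γ) (hγ1 : γ < 1) (μ : S → ℝ) (s : S) :
    HasSum (fun i : ℕ => γ ^ i * (μ ᵥ* M ^ i) s)
      ((μ ᵥ* ((1 : Matrix S S ℝ) - γ • M)⁻¹) s) := by
  letI : NormedRing (Matrix S S ℝ) := Matrix.linftyOpNormedRing
  letI : NormedAlgebra ℝ (Matrix S S ℝ) := Matrix.linftyOpNormedAlgebra
  have hM1 : ‖M‖ ≤ 1 := by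
    rw [Matrix.linfty_opNorm_def]
    have h : (Finset.univ.sup fun i : S => ∑ j : S, ‖M i j‖₊) ≤ 1 := by
      refine Finset.sup_le fun i _ => ?_
      rw [← NNReal.coe_le_coe, NNReal.coe_sum, NNReal.coe_one]
      have h2 : ∀ j : S, (‖M i j‖₊ : ℝ) = M i j := fun j => by
        rw [coe_nnnorm, Real.norm_eq_abs, abs_of_nonneg (hnn i j)]
      rw [Finset.sum_congr rfl fun j _ => h2 j, hrow i]
    exact_mod_cast h
  have hnorm : ‖γ • M‖ < 1 := by
    rw [norm_smul, Real.norm_eq_abs, abs_of_nonneg hγ0]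
    calc γ * ‖M‖ ≤ γ * 1 := mul_le_mul_of_nonneg_left hM1 hγ0
      _ = γ := mul_one γ
      _ < 1 := hγ1
  have hgs := hasSum_geom_series_inverse (γ • M) hnorm
  let L : Matrix S S ℝ →ₗ[ℝ] ℝ :=
    { toFun := fun B => (μ ᵥ* B) s
      map_add' := fun B C => by simp [Matrix.vecMul_add]
      map_smul' := fun c B => by
        simp only [Matrix.vecMul, dotProduct, RingHom.id_apply, smul_eq_mul,
          Matrix.smul_apply, Finset.mul_sum]
        exact Finset.sum_congr rfl fun j _ => by ring }
  have hL := hgs.mapL (LinearMap.toContinuousLinearMap L)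
  have h2 : LinearMap.toContinuousLinearMap L (Ring.inverse (1 - γ • M))
      = (μ ᵥ* ((1 : Matrix S S ℝ) - γ • M)⁻¹) s := by
    rw [Matrix.nonsing_inv_eq_ringInverse]
    rfl
  rw [h2] at hL
  have h1 : (fun i : ℕ => γ ^ i * (μ ᵥ* M ^ i) s)
      = fun i : ℕ => LinearMap.toContinuousLinearMap L ((γ • M) ^ i) := by
    funext i
    rw [LinearMap.coe_toContinuousLinearMap']
    show _ = (μ ᵥ* (γ • M) ^ i) s
    rw [smul_pow]
    have h3 : μ ᵥ* (γ ^ i • M ^ i) = γ ^ i • (μ ᵥ* M ^ i) := by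
      ext j
      simp only [Matrix.vecMul, dotProduct, Matrix.smul_apply, Pi.smul_apply,
        smul_eq_mul, Finset.mul_sum]
      exact Finset.sum_congr rfl fun k _ => by ring
    rw [h3]
    rfl
  rw [h1]
  exact hL

end AuxLemmas

/-- `(1-γ)·‖d_{μ,π_*}/ν‖_∞ ≤ C*_{μ,ν}` where
`C*_{μ,ν} = (1-γ)² ∑_{i,j≥0} γ^{i+j} sup_π ‖μ (P_{π_*})^i (P_π)^j / ν‖_∞`. -/
theorem stmt_5 {S A : Type*} [Fintype S] [Fintype A] [Nonempty S] [Nonempty A] [DecidableEq S]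
    (P : S → A → S → ℝ) (hP : IsKernel P) (r : S → A → ℝ) (γ : ℝ)
    (hγ0 : 0 ≤ γ) (hγ1 : γ < 1)
    (πs : S → A → ℝ) (hπs : IsPolicy πs)
    (μ ν : S → ℝ) (hμ : IsDist μ) (hν : IsDist ν) :
    ENNReal.ofReal (1 - γ) * eratio (occ P γ μ πs) ν
      ≤ ENNReal.ofReal ((1 - γ) ^ 2) *
          ∑' i : ℕ, ∑' j : ℕ, ENNReal.ofReal (γ ^ (i + j)) *
            ⨆ π : {π : S → A → ℝ // IsPolicy π},
              eratio ((μ ᵥ* (PPol P πs ^ i)) ᵥ* (PPol P (π : S → A → ℝ) ^ j)) ν := by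
  classical
  set M := PPol P πs with hMdef
  have hMnn : ∀ s s', 0 ≤ M s s' := PPol_nonneg' hP hπs
  have hMrow : ∀ s, ∑ s', M s s' = 1 := PPol_row_sum hP hπs
  have hμnn : ∀ (i : ℕ) (s : S), 0 ≤ (μ ᵥ* M ^ i) s :=
    fun i s => vecMul_pow_nonneg hMnn hμ.1 i s
  have h1γ : 0 < 1 - γ := by linarith
  have hcpos : (0:ℝ) < (1 - γ) ^ 2 := by positivity
  have hFG : ∀ i : ℕ, ENNReal.ofReal (γ ^ i) * eratio (μ ᵥ* M ^ i) ν ≤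
      ∑' j : ℕ, ENNReal.ofReal (γ ^ (i + j)) *
        ⨆ π : {π : S → A → ℝ // IsPolicy π},
          eratio ((μ ᵥ* (M ^ i)) ᵥ* (PPol P (π : S → A → ℝ) ^ j)) ν := by
    intro i
    refine le_trans ?_ (ENNReal.le_tsum 0)
    rw [add_zero]
    refine mul_le_mul_right ?_ _
    refine le_trans (le_of_eq ?_)
      (le_iSup (fun π : {π : S → A → ℝ // IsPolicy π} =>
        eratio ((μ ᵥ* (M ^ i)) ᵥ* (PPol P (π : S → A → ℝ) ^ 0)) ν) ⟨πs, hπs⟩)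
    rw [pow_zero, Matrix.vecMul_one]
  by_cases hD : ∃ s, ν s = 0 ∧ ∃ i : ℕ, 0 < γ ^ i * (μ ᵥ* M ^ i) s
  · obtain ⟨s, hνs, i, hpos⟩ := hD
    have hγi : 0 < γ ^ i := by
      by_contra h
      push_neg at h
      rw [le_antisymm h (pow_nonneg hγ0 i), zero_mul] at hpos
      exact lt_irrefl 0 hpos
    have hx : 0 < (μ ᵥ* M ^ i) s := by
      by_contra h
      push_neg at h
      rw [le_antisymm h (hμnn i s), mul_zero] at hpos
      exact lt_irrefl 0 hpos
    have etop : eratio (μ ᵥ* M ^ i) ν = ⊤ := eratio_eq_top _ _ hνs hx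
    have hinner := hFG i
    rw [etop, ENNReal.mul_top (ENNReal.ofReal_pos.mpr hγi).ne'] at hinner
    have htot : (∑' i : ℕ, ∑' j : ℕ, ENNReal.ofReal (γ ^ (i + j)) *
        ⨆ π : {π : S → A → ℝ // IsPolicy π},
          eratio ((μ ᵥ* (M ^ i)) ᵥ* (PPol P (π : S → A → ℝ) ^ j)) ν) = ⊤ :=
      top_le_iff.mp (hinner.trans (ENNReal.le_tsum i))
    rw [htot, ENNReal.mul_top (ENNReal.ofReal_pos.mpr hcpos).ne']
    exact le_top
  · push_neg at hD
    have ht : ∀ (i : ℕ) (s : S), ENNReal.ofReal (γ ^ i * (μ ᵥ* M ^ i) s) ≤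
        (ENNReal.ofReal (γ ^ i) * eratio (μ ᵥ* M ^ i) ν) * ENNReal.ofReal (ν s) := by
      intro i s
      rcases eq_or_lt_of_le (hν.1 s) with h0 | hpos
      · rw [ENNReal.ofReal_eq_zero.mpr (hD s h0.symm i)]
        exact zero_le
      · rw [ENNReal.ofReal_mul (pow_nonneg hγ0 i), mul_assoc]
        exact mul_le_mul_right (le_eratio_mul _ _ hpos) _
    have key : ∀ s : S, ENNReal.ofReal (occ P γ μ πs s) * ENNReal.ofReal (1 - γ) ≤
        (ENNReal.ofReal ((1 - γ) ^ 2) * ∑' i : ℕ, ∑' j : ℕ, ENNReal.ofReal (γ ^ (i + j)) *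
          ⨆ π : {π : S → A → ℝ // IsPolicy π},
            eratio ((μ ᵥ* (M ^ i)) ᵥ* (PPol P (π : S → A → ℝ) ^ j)) ν) *
          ENNReal.ofReal (ν s) := by
      intro s
      have hsum := hasSum_vecMul_geom hMnn hMrow hγ0 hγ1 μ s
      have hxnn : 0 ≤ (μ ᵥ* ((1 : Matrix S S ℝ) - γ • M)⁻¹) s :=
        hsum.nonneg fun i => mul_nonneg (pow_nonneg hγ0 i) (hμnn i s)
      have hocc : occ P γ μ πs s = (1 - γ) * (μ ᵥ* ((1 : Matrix S S ℝ) - γ • M)⁻¹) s := by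
        simp [occ, hMdef, smul_eq_mul]
      have step1 : ENNReal.ofReal (occ P γ μ πs s) * ENNReal.ofReal (1 - γ)
          = ENNReal.ofReal ((1 - γ) ^ 2) *
              ENNReal.ofReal ((μ ᵥ* ((1 : Matrix S S ℝ) - γ • M)⁻¹) s) := by
        rw [hocc, ← ENNReal.ofReal_mul (by positivity), ← ENNReal.ofReal_mul hcpos.le]
        ring_nf
      rw [step1]
      have step2 : ENNReal.ofReal ((μ ᵥ* ((1 : Matrix S S ℝ) - γ • M)⁻¹) s)
          = ∑' i : ℕ, ENNReal.ofReal (γ ^ i * (μ ᵥ* M ^ i) s) := by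
        rw [← hsum.tsum_eq]
        exact ENNReal.ofReal_tsum_of_nonneg
          (fun i => mul_nonneg (pow_nonneg hγ0 i) (hμnn i s)) hsum.summable
      rw [step2]
      calc ENNReal.ofReal ((1 - γ) ^ 2) * ∑' i : ℕ, ENNReal.ofReal (γ ^ i * (μ ᵥ* M ^ i) s)
          ≤ ENNReal.ofReal ((1 - γ) ^ 2) *
              ∑' i : ℕ, (ENNReal.ofReal (γ ^ i) * eratio (μ ᵥ* M ^ i) ν) *
                ENNReal.ofReal (ν s) :=
            mul_le_mul_right (ENNReal.tsum_le_tsum fun i => ht i s) _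
        _ = ENNReal.ofReal ((1 - γ) ^ 2) *
              ((∑' i : ℕ, ENNReal.ofReal (γ ^ i) * eratio (μ ᵥ* M ^ i) ν) *
                ENNReal.ofReal (ν s)) := by rw [ENNReal.tsum_mul_right]
        _ ≤ ENNReal.ofReal ((1 - γ) ^ 2) *
              ((∑' i : ℕ, ∑' j : ℕ, ENNReal.ofReal (γ ^ (i + j)) *
                ⨆ π : {π : S → A → ℝ // IsPolicy π},
                  eratio ((μ ᵥ* (M ^ i)) ᵥ* (PPol P (π : S → A → ℝ) ^ j)) ν) *
                ENNReal.ofReal (ν s)) :=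
            mul_le_mul_right (mul_le_mul_left (ENNReal.tsum_le_tsum hFG) _) _
        _ = _ := by rw [mul_assoc]
    have ha0 : ENNReal.ofReal (1 - γ) ≠ 0 := (ENNReal.ofReal_pos.mpr h1γ).ne'
    have hat : ENNReal.ofReal (1 - γ) ≠ ⊤ := ENNReal.ofReal_ne_top
    refine le_trans (mul_le_mul_right (eratio_le_of
      (K := (ENNReal.ofReal ((1 - γ) ^ 2) * ∑' i : ℕ, ∑' j : ℕ, ENNReal.ofReal (γ ^ (i + j)) *
        ⨆ π : {π : S → A → ℝ // IsPolicy π},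
          eratio ((μ ᵥ* (M ^ i)) ᵥ* (PPol P (π : S → A → ℝ) ^ j)) ν) /
        ENNReal.ofReal (1 - γ)) fun s => ?_) _) ENNReal.mul_div_le
    rw [div_eq_mul_inv, mul_right_comm, ← div_eq_mul_inv,
      ENNReal.le_div_iff_mul_le (Or.inl ha0) (Or.inl hat)]
    exact key s
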